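/- Let G be a finite set of C¹ diffeomorphisms of ℝ, closed under taking inverses, with every g ∈ G having everywhere positive derivative, and assume there is a constant C₀ ≥ 1 with 1/C₀ ≤ g'(y) ≤ C₀ for every g ∈ G and every y ∈ ℝ. Let a > 0, let 0 < ε₁ < min{1, a/100}, and let δ₀ with 0 < δ₀ ≤ ε₁ be a logarithmic modulus of continuity for G with respect to ε₁. Suppose x ∈ ℝ satisfies λ_*(x) > a and that the orbit { w(x) : w a word in G } is a bounded subset of ℝ. Then for every 0 < δ₁ < δ₀/8 and every 0 < μ < 1 there exist words φ and ψ in G and points u, v ∈ ℝ with v = ψ(u), such that: (1) (φ∘ψ)(u) = u; (2) (φ∘ψ)'(z) < μ for every z ∈ [u − δ₀/8, u + δ₀/8]; (3) (ψ∘φ)(v) = v; (4) ψ([u − δ₀/8, u + δ₀/8]) ⊆ [x − δ₁, x + δ₁]; (5) |x − v| < δ₁. -/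

import Mathlib

open MeasureTheory Filter Topology

/-- Composition of a list of maps: the list `[g_k, …, g₁]` composes to `g_k ∘ ⋯ ∘ g₁`
(the empty list gives the identity map). -/
def wordComp (w : List (ℝ → ℝ)) : ℝ → ℝ := w.foldr (· ∘ ·) id

/-- A word in `G` is a finite list of elements of `G`. -/
def IsWord (G : Finset (ℝ → ℝ)) (w : List (ℝ → ℝ)) : Prop := ∀ g ∈ w, g ∈ G

/-- The maximal `n`-expansion `μ_n(x)`. -/
noncomputable def maxExp (G : Finset (ℝ → ℝ)) (n : ℕ) (x : ℝ) : ℝ :=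
  sSup {d : ℝ | ∃ w : List (ℝ → ℝ), IsWord G w ∧ w.length ≤ n ∧ d = deriv (wordComp w) x}

/-- The transverse expansion exponent `λ_*(x) = limsup_n log(μ_n(x))/n`, in `[0,∞]`. -/
noncomputable def expExponent (G : Finset (ℝ → ℝ)) (x : ℝ) : ENNReal :=
  Filter.limsup (fun n : ℕ => ENNReal.ofReal (Real.log (maxExp G n x) / n)) Filter.atTop

/-- `δ₀` is a logarithmic modulus of continuity for `G` with respect to `ε₁`. -/
def LogModulus (G : Finset (ℝ → ℝ)) (ε₁ δ₀ : ℝ) : Prop :=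
  ∀ g ∈ G, ∀ y z : ℝ, |y - z| ≤ δ₀ → |Real.log (deriv g y) - Real.log (deriv g z)| ≤ ε₁

lemma wordComp_nil : wordComp [] = id := rfl
lemma wordComp_cons (g : ℝ → ℝ) (w : List (ℝ → ℝ)) : wordComp (g :: w) = g ∘ wordComp w := rfl

lemma wordComp_append (w₁ w₂ : List (ℝ → ℝ)) :
    wordComp (w₁ ++ w₂) = wordComp w₁ ∘ wordComp w₂ := by
  induction w₁ with
  | nil => rfl
  | cons g w ih => simp [wordComp_cons, ih, Function.comp_assoc]

lemma isWord_contDiff {G : Finset (ℝ → ℝ)} (hC1 : ∀ g ∈ G, ContDiff ℝ 1 g)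
    {w : List (ℝ → ℝ)} (hw : IsWord G w) : ContDiff ℝ 1 (wordComp w) := by
  induction w with
  | nil => exact contDiff_id
  | cons g w ih =>
    rw [wordComp_cons]
    exact (hC1 g (hw g (by simp))).comp (ih fun g' hg' => hw g' (by simp [hg']))

lemma isWord_differentiable {G : Finset (ℝ → ℝ)} (hC1 : ∀ g ∈ G, ContDiff ℝ 1 g)
    {w : List (ℝ → ℝ)} (hw : IsWord G w) : Differentiable ℝ (wordComp w) :=
  (isWord_contDiff hC1 hw).differentiable one_ne_zero

lemma deriv_wordComp_cons {G : Finset (ℝ → ℝ)} (hC1 : ∀ g ∈ G, ContDiff ℝ 1 g)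
    {g : ℝ → ℝ} (hg : g ∈ G) {w : List (ℝ → ℝ)} (hw : IsWord G w) (y : ℝ) :
    deriv (wordComp (g :: w)) y = deriv g (wordComp w y) * deriv (wordComp w) y := by
  rw [wordComp_cons]
  exact deriv_comp y ((hC1 g hg).differentiable one_ne_zero _) (isWord_differentiable hC1 hw _)

lemma deriv_wordComp_pos {G : Finset (ℝ → ℝ)} (hC1 : ∀ g ∈ G, ContDiff ℝ 1 g)
    (hpos : ∀ g ∈ G, ∀ y : ℝ, 0 < deriv g y)
    {w : List (ℝ → ℝ)} (hw : IsWord G w) (y : ℝ) : 0 < deriv (wordComp w) y := by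
  induction w with
  | nil => simp [wordComp_nil]
  | cons g w ih =>
    have hg : g ∈ G := hw g (by simp)
    have hw' : IsWord G w := fun g' hg' => hw g' (by simp [hg'])
    rw [deriv_wordComp_cons hC1 hg hw' y]
    exact mul_pos (hpos g hg _) (ih hw')

lemma deriv_wordComp_le {G : Finset (ℝ → ℝ)} (hC1 : ∀ g ∈ G, ContDiff ℝ 1 g)
    (hpos : ∀ g ∈ G, ∀ y : ℝ, 0 < deriv g y) {C₀ : ℝ}
    (hub : ∀ g ∈ G, ∀ y : ℝ, deriv g y ≤ C₀)
    {w : List (ℝ → ℝ)} (hw : IsWord G w) (y : ℝ) :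
    deriv (wordComp w) y ≤ C₀ ^ w.length := by
  induction w with
  | nil => simp [wordComp_nil]
  | cons g w ih =>
    have hg : g ∈ G := hw g (by simp)
    have hw' : IsWord G w := fun g' hg' => hw g' (by simp [hg'])
    rw [deriv_wordComp_cons hC1 hg hw' y, List.length_cons, pow_succ, mul_comm (C₀ ^ w.length) C₀]
    exact mul_le_mul (hub g hg _) (ih hw') (deriv_wordComp_pos hC1 hpos hw' y).le
      ((hpos g hg y).le.trans (hub g hg y))

section Inv
variable {G : Finset (ℝ → ℝ)} {inv : (ℝ → ℝ) → (ℝ → ℝ)}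
  (hinv' : ∀ g ∈ G, inv g ∈ G ∧ (∀ t, inv g (g t) = t) ∧ (∀ t, g (inv g t) = t))

include hinv'

lemma isWord_invWord {W : List (ℝ → ℝ)} (hW : IsWord G W) :
    IsWord G ((W.map inv).reverse) := by
  intro h hh
  rw [List.mem_reverse, List.mem_map] at hh
  obtain ⟨g, hg, rfl⟩ := hh
  exact (hinv' g (hW g hg)).1

lemma wordComp_invWord_left {W : List (ℝ → ℝ)} (hW : IsWord G W) (t : ℝ) :
    wordComp ((W.map inv).reverse) (wordComp W t) = t := by
  induction W generalizing t with
  | nil => rfl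
  | cons g W ih =>
    have hg : g ∈ G := hW g (by simp)
    have hW' : IsWord G W := fun g' hg' => hW g' (by simp [hg'])
    simp only [List.map_cons, List.reverse_cons, wordComp_append, wordComp_cons,
      Function.comp_apply]
    show wordComp (List.map inv W).reverse (inv g (wordComp [] (g (wordComp W t)))) = t
    rw [wordComp_nil, id_eq, (hinv' g hg).2.1, ih hW']

lemma wordComp_invWord_right {W : List (ℝ → ℝ)} (hW : IsWord G W) (t : ℝ) :
    wordComp W (wordComp ((W.map inv).reverse) t) = t := by
  induction W generalizing t with
  | nil => rfl
  | cons g W ih =>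
    have hg : g ∈ G := hW g (by simp)
    have hW' : IsWord G W := fun g' hg' => hW g' (by simp [hg'])
    simp only [List.map_cons, List.reverse_cons, wordComp_append, wordComp_cons,
      Function.comp_apply]
    show g (wordComp W (wordComp (List.map inv W).reverse (inv g (wordComp [] t)))) = t
    rw [wordComp_nil, id_eq, ih hW', (hinv' g hg).2.2]

end Inv

/-- derivative of the chosen inverse at the image point -/
lemma deriv_inv_letter {G : Finset (ℝ → ℝ)} (hC1 : ∀ g ∈ G, ContDiff ℝ 1 g)
    (hpos : ∀ g ∈ G, ∀ y : ℝ, 0 < deriv g y)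
    {g h : ℝ → ℝ} (hg : g ∈ G) (hh : h ∈ G) (hgh : ∀ t, h (g t) = t) (t : ℝ) :
    deriv h (g t) = (deriv g t)⁻¹ := by
  have hchain : deriv (h ∘ g) t = deriv h (g t) * deriv g t :=
    deriv_comp t ((hC1 h hh).differentiable one_ne_zero _) ((hC1 g hg).differentiable one_ne_zero _)
  have hid : (h ∘ g) = id := funext fun u => hgh u
  rw [hid] at hchain
  simp only [deriv_id] at hchain
  have hd : deriv g t ≠ 0 := (hpos g hg t).ne'
  field_simp
  linarith [hchain]

/-- Core contraction lemma: along a "hyperbolic word" `W` at `x₀`, the inverse word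
contracts a `ρ`-neighborhood of the endpoint `wordComp W x₀`. -/
lemma contract_of_hyperbolic {G : Finset (ℝ → ℝ)} (hC1 : ∀ g ∈ G, ContDiff ℝ 1 g)
    (hpos : ∀ g ∈ G, ∀ y : ℝ, 0 < deriv g y)
    {inv : (ℝ → ℝ) → (ℝ → ℝ)}
    (hinv' : ∀ g ∈ G, inv g ∈ G ∧ (∀ t, inv g (g t) = t) ∧ (∀ t, g (inv g t) = t))
    {a ε₁ δ₀ ρ : ℝ} (hε₁ : 0 < ε₁) (hmod : LogModulus G ε₁ δ₀)
    (hρ : 0 < ρ) (hρδ : ρ ≤ δ₀) (ha : 0 < a) (hε₁a : ε₁ ≤ a / 2) :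
    ∀ (W : List (ℝ → ℝ)), IsWord G W → ∀ x₀ : ℝ,
    (∀ r ≤ W.length,
      a / 2 * r ≤ Real.log (deriv (wordComp (W.take r)) (wordComp (W.drop r) x₀))) →
    ∀ z ∈ Set.Icc (wordComp W x₀ - ρ) (wordComp W x₀ + ρ),
      deriv (wordComp ((W.map inv).reverse)) z ≤
        Real.exp (ε₁ * W.length - Real.log (deriv (wordComp W) x₀)) ∧
      |wordComp ((W.map inv).reverse) z - x₀| ≤
        ρ * Real.exp (ε₁ * W.length - Real.log (deriv (wordComp W) x₀)) := by
  intro W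
  induction W using List.reverseRecOn with
  | nil =>
    intro _ x₀ _ z hz
    simp only [wordComp_nil, id_eq] at hz
    simp only [List.length_nil, Nat.cast_zero, mul_zero, wordComp_nil, deriv_id,
      Real.log_one, sub_zero, Real.exp_zero, List.map_nil, List.reverse_nil, id_eq, mul_one]
    constructor
    · exact le_rfl
    · rw [abs_sub_le_iff]
      constructor <;> [linarith [hz.2]; linarith [hz.1]]
  | append_singleton W' gl ih =>
    intro hW x₀ hyp z hz
    have hglG : gl ∈ G := hW gl (by simp)
    have hW'G : IsWord G W' := fun g' hg' => hW g' (by simp [hg'])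
    set x₁ := gl x₀ with hx₁
    have hcompW : wordComp (W' ++ [gl]) x₀ = wordComp W' x₁ := by
      rw [wordComp_append]; rfl
    -- hypothesis for W' at x₁
    have hyp' : ∀ r ≤ W'.length,
        a / 2 * r ≤ Real.log (deriv (wordComp (W'.take r)) (wordComp (W'.drop r) x₁)) := by
      intro r hr
      have h1 := hyp r (by simp; omega)
      rwa [List.take_append_of_le_length hr, List.drop_append_of_le_length hr,
        wordComp_append] at h1
    -- notation
    set n' := W'.length with hn'
    set L' := Real.log (deriv (wordComp W') x₁) with hL'
    set t := Real.log (deriv gl x₀) with ht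
    have hglpos : 0 < deriv gl x₀ := hpos gl hglG x₀
    have hW'pos : 0 < deriv (wordComp W') x₁ := deriv_wordComp_pos hC1 hpos hW'G x₁
    -- full log-derivative additivity
    have hLfull : Real.log (deriv (wordComp (W' ++ [gl])) x₀) = L' + t := by
      rw [wordComp_append]
      have h2 : wordComp [gl] = gl := by
        funext u; rfl
      rw [h2, deriv_comp x₀ (isWord_differentiable hC1 hW'G _)
        ((hC1 gl hglG).differentiable one_ne_zero _), Real.log_mul hW'pos.ne' hglpos.ne']
    -- lower bound on L'
    have hL'lb : a / 2 * n' ≤ L' := by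
      have h1 := hyp n' (by simp; omega)
      rw [List.take_left, List.drop_left] at h1
      exact h1
    have hB'le1 : Real.exp (ε₁ * n' - L') ≤ 1 := by
      rw [Real.exp_le_one_iff]
      nlinarith [Nat.cast_nonneg (α := ℝ) n']
    -- IH applied at x₁
    have hz' : z ∈ Set.Icc (wordComp W' x₁ - ρ) (wordComp W' x₁ + ρ) := by
      rwa [hcompW] at hz
    obtain ⟨ihd, ihdist⟩ := ih hW'G x₁ hyp' z hz'
    set F' := wordComp ((W'.map inv).reverse) with hF'
    set B' := Real.exp (ε₁ * n' - L') with hB'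
    -- the inverse letter
    set h := inv gl with hh
    have hhG : h ∈ G := (hinv' gl hglG).1
    have hhx₁ : deriv h x₁ = (deriv gl x₀)⁻¹ :=
      deriv_inv_letter hC1 hpos hglG hhG (hinv' gl hglG).2.1 x₀
    have hloghx₁ : Real.log (deriv h x₁) = -t := by rw [hhx₁, Real.log_inv]
    -- modulus bound on deriv h near x₁
    have hmodh : ∀ q : ℝ, |q - x₁| ≤ δ₀ → deriv h q ≤ Real.exp (ε₁ - t) := by
      intro q hq
      have h1 := hmod h hhG q x₁ hq
      have h2 : Real.log (deriv h q) ≤ ε₁ - t := by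
        have := abs_le.1 h1
        rw [hloghx₁] at this
        linarith [this.2]
      calc deriv h q = Real.exp (Real.log (deriv h q)) :=
            (Real.exp_log (hpos h hhG q)).symm
        _ ≤ Real.exp (ε₁ - t) := Real.exp_le_exp.2 h2
    have hdistF' : |F' z - x₁| ≤ ρ * B' := ihdist
    have hdist_le_δ₀ : |F' z - x₁| ≤ δ₀ := by
      calc |F' z - x₁| ≤ ρ * B' := hdistF'
        _ ≤ ρ * 1 := by nlinarith
        _ ≤ δ₀ := by linarith
    -- chain rule for the new inverse word
    have hinvword : ((W' ++ [gl]).map inv).reverse = h :: (W'.map inv).reverse := by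
      simp [hh]
    have hIWinv : IsWord G ((W'.map inv).reverse) := isWord_invWord hinv' hW'G
    have hderiv_eq : deriv (wordComp (((W' ++ [gl]).map inv).reverse)) z
        = deriv h (F' z) * deriv F' z := by
      rw [hinvword]
      exact deriv_wordComp_cons hC1 hhG hIWinv z
    have hBsplit : Real.exp (ε₁ * (W' ++ [gl]).length -
        Real.log (deriv (wordComp (W' ++ [gl])) x₀)) = Real.exp (ε₁ - t) * B' := by
      rw [hLfull, ← Real.exp_add]
      congr 1
      simp only [List.length_append, List.length_singleton, Nat.cast_add, Nat.cast_one]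
      ring
    have hderivF'pos : 0 < deriv F' z := deriv_wordComp_pos hC1 hpos hIWinv z
    constructor
    · rw [hderiv_eq, hBsplit]
      exact mul_le_mul (hmodh _ hdist_le_δ₀) ihd hderivF'pos.le (Real.exp_nonneg _)
    · -- distance bound via MVT on the interval around x₁
      have hval_eq : wordComp (((W' ++ [gl]).map inv).reverse) z = h (F' z) := by
        rw [hinvword, wordComp_cons]; rfl
      have hx₀eq : h x₁ = x₀ := (hinv' gl hglG).2.1 x₀
      rw [hval_eq]
      have hρB' : 0 ≤ ρ * B' := by positivity
      have hmvt : ‖h (F' z) - h x₁‖ ≤ Real.exp (ε₁ - t) * ‖F' z - x₁‖ := by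
        have habs := abs_le.1 hdistF'
        have hρBδ : ρ * B' ≤ δ₀ := le_trans (by nlinarith) hρδ
        refine Convex.norm_image_sub_le_of_norm_deriv_le
          (s := Set.Icc (x₁ - ρ * B') (x₁ + ρ * B'))
          (fun q _ => ((hC1 h hhG).differentiable one_ne_zero).differentiableAt)
          (fun q hq => ?_) (convex_Icc _ _) ?_ ?_
        · rw [Real.norm_eq_abs, abs_of_pos (hpos h hhG q)]
          apply hmodh
          rw [abs_sub_le_iff]
          exact ⟨by linarith [hq.2], by linarith [hq.1]⟩
        · exact ⟨by linarith, by linarith⟩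
        · exact ⟨by linarith [habs.1], by linarith [habs.2]⟩
      rw [Real.norm_eq_abs, Real.norm_eq_abs] at hmvt
      calc |h (F' z) - x₀| = |h (F' z) - h x₁| := by rw [hx₀eq]
        _ ≤ Real.exp (ε₁ - t) * |F' z - x₁| := hmvt
        _ ≤ Real.exp (ε₁ - t) * (ρ * B') :=
            mul_le_mul_of_nonneg_left hdistF' (Real.exp_nonneg _)
        _ = ρ * (Real.exp (ε₁ - t) * B') := by ring
        _ = ρ * Real.exp (ε₁ * (W' ++ [gl]).length -
              Real.log (deriv (wordComp (W' ++ [gl])) x₀)) := by rw [hBsplit]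

/-- From `expExponent > a`, extract arbitrarily long words expanding at rate `a` at `x`. -/
lemma expansion_word {G : Finset (ℝ → ℝ)} (hC1 : ∀ g ∈ G, ContDiff ℝ 1 g)
    (hpos : ∀ g ∈ G, ∀ y : ℝ, 0 < deriv g y) {C₀ : ℝ} (hC₀ : 1 ≤ C₀)
    (hub : ∀ g ∈ G, ∀ y : ℝ, deriv g y ≤ C₀) {a : ℝ} (ha : 0 < a) {x : ℝ}
    (hx : ENNReal.ofReal a < expExponent G x) (K : ℕ) :
    ∃ w : List (ℝ → ℝ), IsWord G w ∧ K ≤ w.length ∧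
      Real.exp (a * w.length) ≤ deriv (wordComp w) x := by
  have hfreq : ∃ᶠ n in Filter.atTop,
      ENNReal.ofReal a < ENNReal.ofReal (Real.log (maxExp G n x) / n) := by
    by_contra hcon
    rw [Filter.not_frequently] at hcon
    have h2 : Filter.limsup (fun n : ℕ => ENNReal.ofReal (Real.log (maxExp G n x) / n))
        Filter.atTop ≤ ENNReal.ofReal a :=
      Filter.limsup_le_of_le (by isBoundedDefault) (hcon.mono fun n hn => not_lt.1 hn)
    exact absurd hx (not_lt.2 h2)
  -- choose n large
  set N₀ : ℕ := max 1 ⌈(K : ℝ) * Real.log C₀ / a⌉₊ with hN₀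
  obtain ⟨n, hnN, hn⟩ := Filter.frequently_atTop.1 hfreq N₀
  have hn1 : 1 ≤ n := le_trans (le_max_left _ _) hnN
  have hnpos : (0 : ℝ) < n := by exact_mod_cast hn1
  have halt : a < Real.log (maxExp G n x) / n := by
    rwa [ENNReal.ofReal_lt_ofReal_iff_of_nonneg ha.le] at hn
  have han : a * n < Real.log (maxExp G n x) := by
    rw [lt_div_iff₀ hnpos] at halt
    linarith
  set S := {d : ℝ | ∃ w : List (ℝ → ℝ), IsWord G w ∧ w.length ≤ n ∧ d = deriv (wordComp w) x}
    with hS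
  have hone : (1 : ℝ) ∈ S := by
    refine ⟨[], fun g hg => by simp at hg, by simp, ?_⟩
    simp [wordComp_nil]
  have hex : ∃ d ∈ S, Real.exp (a * n) < d := by
    by_contra hcon
    push_neg at hcon
    have hsup : maxExp G n x ≤ Real.exp (a * n) := Real.sSup_le hcon (Real.exp_pos _).le
    have hge1 : (1 : ℝ) ≤ maxExp G n x := le_csSup ⟨Real.exp (a * n), hcon⟩ hone
    have : Real.log (maxExp G n x) ≤ a * n := by
      rw [Real.log_le_iff_le_exp (by linarith)]
      exact hsup
    linarith
  obtain ⟨d, ⟨w, hwG, hwlen, rfl⟩, hd⟩ := hex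
  refine ⟨w, hwG, ?_, ?_⟩
  · -- length at least K
    have hup : deriv (wordComp w) x ≤ C₀ ^ w.length := deriv_wordComp_le hC1 hpos hub hwG x
    have h1 : Real.exp (a * n) < C₀ ^ w.length := lt_of_lt_of_le hd hup
    have h2 : a * n < w.length * Real.log C₀ := by
      have := Real.log_lt_log (Real.exp_pos _) h1
      rwa [Real.log_exp, Real.log_pow] at this
    have h3 : (K : ℝ) * Real.log C₀ ≤ a * n := by
      have hceil : ((K : ℝ) * Real.log C₀ / a) ≤ (⌈(K : ℝ) * Real.log C₀ / a⌉₊ : ℝ) :=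
        Nat.le_ceil _
      have hN₀n : (⌈(K : ℝ) * Real.log C₀ / a⌉₊ : ℝ) ≤ (n : ℝ) := by
        exact_mod_cast le_trans (le_max_right 1 _) hnN
      rw [div_le_iff₀ ha] at hceil
      calc (K : ℝ) * Real.log C₀ ≤ ⌈(K : ℝ) * Real.log C₀ / a⌉₊ * a := hceil
        _ ≤ n * a := by
            apply mul_le_mul_of_nonneg_right hN₀n ha.le
        _ = a * n := by ring
    by_contra hKk
    push_neg at hKk
    have : (w.length : ℝ) * Real.log C₀ ≤ (K : ℝ) * Real.log C₀ :=
      mul_le_mul_of_nonneg_right (by exact_mod_cast hKk.le) (Real.log_nonneg hC₀)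
    linarith
  · calc Real.exp (a * w.length) ≤ Real.exp (a * n) := by
          apply Real.exp_le_exp.2
          apply mul_le_mul_of_nonneg_left _ ha.le
          exact_mod_cast hwlen
      _ ≤ deriv (wordComp w) x := hd.le

/-- Key lemma: arbitrarily strong contracting inverse words landing exactly on `x`,
with uniformly-sized domains of contraction around an orbit point `p`. -/
lemma key_contraction {G : Finset (ℝ → ℝ)} (hC1 : ∀ g ∈ G, ContDiff ℝ 1 g)
    (hpos : ∀ g ∈ G, ∀ y : ℝ, 0 < deriv g y)
    {inv : (ℝ → ℝ) → (ℝ → ℝ)}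
    (hinv' : ∀ g ∈ G, inv g ∈ G ∧ (∀ t, inv g (g t) = t) ∧ (∀ t, g (inv g t) = t))
    {C₀ : ℝ} (hC₀ : 1 ≤ C₀) (hub : ∀ g ∈ G, ∀ y : ℝ, deriv g y ≤ C₀)
    {a ε₁ δ₀ ρ : ℝ} (ha : 0 < a) (hε₁ : 0 < ε₁) (hε₁a : ε₁ ≤ a / 2)
    (hρ : 0 < ρ) (hρδ : ρ ≤ δ₀) (hmod : LogModulus G ε₁ δ₀)
    {x : ℝ} (hx : ENNReal.ofReal a < expExponent G x) :
    ∀ ε : ℝ, 0 < ε → ∃ (φ ψ : List (ℝ → ℝ)) (p : ℝ), IsWord G φ ∧ IsWord G ψ ∧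
      (∃ w' : List (ℝ → ℝ), IsWord G w' ∧ p = wordComp w' x) ∧
      (∀ t : ℝ, wordComp φ (wordComp ψ t) = t) ∧
      wordComp ψ p = x ∧
      ∀ z ∈ Set.Icc (p - ρ) (p + ρ),
        deriv (wordComp ψ) z ≤ ε ∧ |wordComp ψ z - x| ≤ ρ * ε := by
  intro ε hε
  -- choose K with exp(-(a/2) K) ≤ ε
  obtain ⟨K, hK⟩ : ∃ K : ℕ, Real.exp (-(a / 2) * K) ≤ ε := by
    refine ⟨⌈(-Real.log ε) / (a / 2)⌉₊, ?_⟩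
    have hceil : (-Real.log ε) / (a / 2) ≤ (⌈(-Real.log ε) / (a / 2)⌉₊ : ℝ) := Nat.le_ceil _
    rw [div_le_iff₀ (by linarith)] at hceil
    have h1 : -(a / 2) * (⌈(-Real.log ε) / (a / 2)⌉₊ : ℝ) ≤ Real.log ε := by nlinarith
    calc Real.exp (-(a / 2) * (⌈(-Real.log ε) / (a / 2)⌉₊ : ℝ))
        ≤ Real.exp (Real.log ε) := Real.exp_le_exp.2 h1
      _ = ε := Real.exp_log hε
  obtain ⟨w, hwG, hwK, hwexp⟩ := expansion_word hC1 hpos hC₀ hub ha hx K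
  set k := w.length with hk
  -- partial log-derivatives
  set S : ℕ → ℝ := fun j => Real.log (deriv (wordComp (w.drop (k - j))) x) with hSdef
  -- additivity
  have hadd : ∀ j m', j ≤ m' → m' ≤ k →
      S m' = Real.log (deriv (wordComp ((w.drop (k - m')).take (m' - j)))
        (wordComp (w.drop (k - j)) x)) + S j := by
    intro j m' hjm hmk
    have hdd : (w.drop (k - m')).drop (m' - j) = w.drop (k - j) := by
      rw [List.drop_drop]
      congr 1
      omega
    have hsplit : w.drop (k - m') = ((w.drop (k - m')).take (m' - j)) ++ w.drop (k - j) := by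
      conv_lhs => rw [← List.take_append_drop (m' - j) (w.drop (k - m'))]
      rw [hdd]
    have hT : IsWord G ((w.drop (k - m')).take (m' - j)) :=
      fun g hg => hwG g (List.drop_subset _ _ (List.take_subset _ _ hg))
    have hD : IsWord G (w.drop (k - j)) := fun g hg => hwG g (List.drop_subset _ _ hg)
    have hderiv : deriv (wordComp (w.drop (k - m'))) x =
        deriv (wordComp ((w.drop (k - m')).take (m' - j))) (wordComp (w.drop (k - j)) x) *
          deriv (wordComp (w.drop (k - j))) x := by
      conv_lhs => rw [hsplit]
      rw [wordComp_append]
      exact deriv_comp x (isWord_differentiable hC1 hT _) (isWord_differentiable hC1 hD _)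
    show Real.log (deriv (wordComp (w.drop (k - m'))) x) = _
    rw [hderiv, Real.log_mul (deriv_wordComp_pos hC1 hpos hT _).ne'
        (deriv_wordComp_pos hC1 hpos hD _).ne']
  -- Pliss argmax
  obtain ⟨m, hmmem, hmmax⟩ := Finset.exists_max_image (Finset.range (k + 1))
    (fun j => S j - a / 2 * j) ⟨0, by simp⟩
  have hmk : m ≤ k := by
    have := Finset.mem_range.1 hmmem
    omega
  set W := w.drop (k - m) with hWdef
  have hWG : IsWord G W := fun g hg => hwG g (List.drop_subset _ _ hg)
  have hWlen : W.length = m := by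
    rw [hWdef, List.length_drop]
    omega
  -- the hyperbolicity hypothesis for W
  have hyp : ∀ r ≤ W.length,
      a / 2 * r ≤ Real.log (deriv (wordComp (W.take r)) (wordComp (W.drop r) x)) := by
    intro r hr
    rw [hWlen] at hr
    have h1 := hadd (m - r) m (by omega) hmk
    have h2 : m - (m - r) = r := by omega
    rw [h2] at h1
    have hdd : W.drop r = w.drop (k - (m - r)) := by
      rw [hWdef, List.drop_drop]
      congr 1
      omega
    rw [hdd]
    have h3 := hmmax (m - r) (Finset.mem_range.2 (by omega))
    have hcast : ((m - r : ℕ) : ℝ) = (m : ℝ) - r := by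
      rw [Nat.cast_sub (by omega)]
    simp only [hcast] at h3
    have : S m - S (m - r) ≥ a / 2 * r := by linarith
    linarith [h1, this]
  -- lower bound on S m
  have hSk : a * k ≤ S k := by
    have : w.drop (k - k) = w := by simp
    rw [hSdef]
    simp only [this]
    calc a * k = Real.log (Real.exp (a * k)) := (Real.log_exp _).symm
      _ ≤ Real.log (deriv (wordComp w) x) :=
          Real.log_le_log (Real.exp_pos _) hwexp
  have hSm : a / 2 * k + a / 2 * m ≤ S m := by
    have h3 := hmmax k (Finset.mem_range.2 (by omega))
    have : S k - a / 2 * k ≤ S m - a / 2 * m := h3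
    linarith
  -- the contraction bound
  have hBle : Real.exp (ε₁ * W.length - Real.log (deriv (wordComp W) x)) ≤ ε := by
    have hδS : Real.log (deriv (wordComp W) x) = S m := rfl
    rw [hδS, hWlen]
    calc Real.exp (ε₁ * m - S m) ≤ Real.exp (-(a / 2) * K) := by
          apply Real.exp_le_exp.2
          have hkK : (K : ℝ) ≤ (k : ℝ) := by exact_mod_cast hwK
          have hm0 : (0 : ℝ) ≤ (m : ℝ) := Nat.cast_nonneg m
          nlinarith
      _ ≤ ε := hK
  -- conclude using contract_of_hyperbolic
  refine ⟨W, (W.map inv).reverse, wordComp W x, hWG, isWord_invWord hinv' hWG,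
    ⟨W, hWG, rfl⟩, wordComp_invWord_right hinv' hWG, wordComp_invWord_left hinv' hWG x, ?_⟩
  intro z hz
  obtain ⟨hd, hdist⟩ := contract_of_hyperbolic hC1 hpos hinv' hε₁ hmod hρ hρδ ha hε₁a
    W hWG x hyp z hz
  exact ⟨le_trans hd hBle, le_trans hdist (mul_le_mul_of_nonneg_left hBle hρ.le)⟩

/-- Existence of hyperbolic fixed points for the pseudogroup near a point of the
hyperbolic set, with uniform estimates on the domains of contraction. -/
theorem hyperbolic_fixed_point_near_expansive_point
    (G : Finset (ℝ → ℝ))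
    (hC1 : ∀ g ∈ G, ContDiff ℝ 1 g)
    (hpos : ∀ g ∈ G, ∀ y : ℝ, 0 < deriv g y)
    (hinv : ∀ g ∈ G, ∃ h ∈ G, (∀ x : ℝ, h (g x) = x) ∧ (∀ x : ℝ, g (h x) = x))
    (C₀ : ℝ) (hC₀ : 1 ≤ C₀)
    (hbound : ∀ g ∈ G, ∀ y : ℝ, 1 / C₀ ≤ deriv g y ∧ deriv g y ≤ C₀)
    (a ε₁ δ₀ : ℝ) (ha : 0 < a) (hε₁ : 0 < ε₁) (hε₁a : ε₁ < min 1 (a / 100))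
    (hδ₀pos : 0 < δ₀) (hδ₀ε₁ : δ₀ ≤ ε₁) (hmod : LogModulus G ε₁ δ₀)
    (x : ℝ) (hx : ENNReal.ofReal a < expExponent G x)
    (hbdd : Bornology.IsBounded
      {y : ℝ | ∃ w : List (ℝ → ℝ), IsWord G w ∧ y = wordComp w x}) :
    ∀ δ₁ μ : ℝ, 0 < δ₁ → δ₁ < δ₀ / 8 → 0 < μ → μ < 1 →
      ∃ (φ ψ : List (ℝ → ℝ)) (u v : ℝ), IsWord G φ ∧ IsWord G ψ ∧
        v = wordComp ψ u ∧
        wordComp φ (wordComp ψ u) = u ∧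
        (∀ z ∈ Set.Icc (u - δ₀ / 8) (u + δ₀ / 8),
          deriv (wordComp φ ∘ wordComp ψ) z < μ) ∧
        wordComp ψ (wordComp φ v) = v ∧
        wordComp ψ '' Set.Icc (u - δ₀ / 8) (u + δ₀ / 8) ⊆ Set.Icc (x - δ₁) (x + δ₁) ∧
        |x - v| < δ₁ := by
  intro δ₁ μ hδ₁ hδ₁8 hμ hμ1
  -- basic constants
  have hε₁a2 : ε₁ ≤ a / 2 := by
    have := (lt_min_iff.1 hε₁a).2
    linarith
  set ρ := δ₀ / 4 with hρdef
  have hρ : 0 < ρ := by positivity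
  have hρδ : ρ ≤ δ₀ := by rw [hρdef]; linarith
  -- the inverse-choice function
  classical
  set inv : (ℝ → ℝ) → (ℝ → ℝ) := fun g => if hg : g ∈ G then (hinv g hg).choose else id
    with hinvdef
  have hinv' : ∀ g ∈ G, inv g ∈ G ∧ (∀ t, inv g (g t) = t) ∧ (∀ t, g (inv g t) = t) := by
    intro g hg
    have hspec := (hinv g hg).choose_spec
    rw [hinvdef]
    simp only [dif_pos hg]
    exact ⟨hspec.1, hspec.2.1, hspec.2.2⟩
  have hub : ∀ g ∈ G, ∀ y : ℝ, deriv g y ≤ C₀ := fun g hg y => (hbound g hg y).2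
  -- key contractions for every n
  have hkey : ∀ n : ℕ, ∃ (φ ψ : List (ℝ → ℝ)) (p : ℝ), IsWord G φ ∧ IsWord G ψ ∧
      (∃ w' : List (ℝ → ℝ), IsWord G w' ∧ p = wordComp w' x) ∧
      (∀ t : ℝ, wordComp φ (wordComp ψ t) = t) ∧
      wordComp ψ p = x ∧
      ∀ z ∈ Set.Icc (p - ρ) (p + ρ),
        deriv (wordComp ψ) z ≤ 1 / (n + 1) ∧ |wordComp ψ z - x| ≤ ρ * (1 / (n + 1)) :=
    fun n => key_contraction hC1 hpos hinv' hC₀ hub ha hε₁ hε₁a2 hρ hρδ hmod hx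
      (1 / (n + 1)) (by positivity)
  choose φs ψs ps hφG hψG horb hid hpx hcontr using hkey
  -- a convergent subsequence of the points ps
  obtain ⟨plim, -, σ, hσmono, hσtend⟩ := tendsto_subseq_of_bounded hbdd
    (x := ps) (fun n => horb n)
  rw [Metric.tendsto_atTop] at hσtend
  obtain ⟨Nev, hNev⟩ := hσtend (δ₀ / 200) (by positivity)
  -- first word: fix i
  set i := σ Nev with hi
  set f₁ := wordComp (φs i) with hf₁
  set p₁ := ps i with hp₁
  have hp₁close : |p₁ - plim| < δ₀ / 200 := by
    have := hNev Nev le_rfl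
    rwa [Real.dist_eq] at this
  have hf₁x : f₁ x = p₁ := by
    rw [hf₁, hp₁, ← hpx i]
    exact hid i (ps i)
  have hC1f₁ : ContDiff ℝ 1 f₁ := isWord_contDiff hC1 (hφG i)
  set Λ := deriv f₁ x + 1 with hΛ
  have hΛpos : 0 < Λ := by
    have := deriv_wordComp_pos hC1 hpos (hφG i) x
    rw [hΛ]
    linarith
  -- continuity: a good radius τ around x
  have hev : ∀ᶠ z in 𝓝 x, deriv f₁ z < Λ ∧ |f₁ z - p₁| < δ₀ / 100 := by
    have e1 : ∀ᶠ z in 𝓝 x, deriv f₁ z < Λ := by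
      have hcd : Continuous (deriv f₁) := hC1f₁.continuous_deriv le_rfl
      have : deriv f₁ x < Λ := by rw [hΛ]; linarith
      exact (hcd.continuousAt).eventually_lt continuousAt_const this
    have e2 : ∀ᶠ z in 𝓝 x, |f₁ z - p₁| < δ₀ / 100 := by
      have htend : Filter.Tendsto f₁ (𝓝 x) (𝓝 p₁) := by
        rw [← hf₁x]
        exact hC1f₁.continuous.continuousAt
      have hball : ∀ᶠ y in 𝓝 p₁, |y - p₁| < δ₀ / 100 := by
        have := Metric.ball_mem_nhds p₁ (show (0:ℝ) < δ₀ / 100 by positivity)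
        filter_upwards [this] with y hy
        rwa [Metric.mem_ball, Real.dist_eq] at hy
      exact htend.eventually hball
    exact e1.and e2
  obtain ⟨τ, hτpos, hτ⟩ := Metric.eventually_nhds_iff.1 hev
  -- second word: choose j in the subsequence, far along
  set c := min (min (τ / ρ) (δ₁ / ρ)) (μ / Λ) with hc
  have hcpos : 0 < c := by
    apply lt_min (lt_min (by positivity) (by positivity)) (by positivity)
  obtain ⟨N₂, hN₂⟩ := exists_nat_gt (1 / c)
  set M := max N₂ Nev with hM
  set j := σ M with hj
  set εj := 1 / ((j : ℝ) + 1) with hεj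
  have hεjpos : 0 < εj := by positivity
  have hjN₂ : (N₂ : ℝ) ≤ (j : ℝ) := by
    have h1 : N₂ ≤ M := le_max_left _ _
    have h2 : M ≤ σ M := hσmono.le_apply
    exact_mod_cast le_trans h1 h2
  have hεjc : εj < c := by
    rw [hεj, div_lt_iff₀ (by positivity), ← div_lt_iff₀' hcpos]
    calc 1 / c < (N₂ : ℝ) := hN₂
      _ ≤ (j : ℝ) := hjN₂
      _ < (j : ℝ) + 1 := by linarith
  have hρεjτ : ρ * εj < τ := by
    have h1 : εj < τ / ρ := lt_of_lt_of_le hεjc (le_trans (min_le_left _ _) (min_le_left _ _))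
    rw [lt_div_iff₀ hρ] at h1
    linarith
  have hρεjδ₁ : ρ * εj < δ₁ := by
    have h1 : εj < δ₁ / ρ := lt_of_lt_of_le hεjc (le_trans (min_le_left _ _) (min_le_right _ _))
    rw [lt_div_iff₀ hρ] at h1
    linarith
  have hΛεjμ : Λ * εj < μ := by
    have h1 : εj < μ / Λ := lt_of_lt_of_le hεjc (min_le_right _ _)
    rw [lt_div_iff₀ hΛpos] at h1
    linarith
  set ψc := wordComp (ψs j) with hψc
  set p₂ := ps j with hp₂
  have hp₂close : |p₂ - plim| < δ₀ / 200 := by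
    have := hNev M (le_max_right _ _)
    rwa [Real.dist_eq] at this
  have hp₁p₂ : |p₁ - p₂| < δ₀ / 100 := by
    calc |p₁ - p₂| ≤ |p₁ - plim| + |plim - p₂| := abs_sub_le _ _ _
      _ < δ₀ / 200 + δ₀ / 200 := by
          rw [abs_sub_comm plim p₂]
          linarith
      _ = δ₀ / 100 := by ring
  have hcψ : ∀ z ∈ Set.Icc (p₂ - ρ) (p₂ + ρ),
      deriv ψc z ≤ εj ∧ |ψc z - x| ≤ ρ * εj := hcontr j
  -- the return map bound
  have hR : ∀ z ∈ Set.Icc (p₂ - ρ) (p₂ + ρ),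
      deriv f₁ (ψc z) < Λ ∧ |f₁ (ψc z) - p₂| < δ₀ / 50 := by
    intro z hz
    obtain ⟨hdz, hdistz⟩ := hcψ z hz
    have hdistτ : dist (ψc z) x < τ := by
      rw [Real.dist_eq]
      exact lt_of_le_of_lt hdistz hρεjτ
    obtain ⟨hd1, hd2⟩ := hτ hdistτ
    refine ⟨hd1, ?_⟩
    calc |f₁ (ψc z) - p₂| ≤ |f₁ (ψc z) - p₁| + |p₁ - p₂| := abs_sub_le _ _ _
      _ < δ₀ / 100 + δ₀ / 100 := by linarith
      _ = δ₀ / 50 := by ring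
  -- fixed point via IVT
  have hψcont : Continuous ψc := (isWord_contDiff hC1 (hψG j)).continuous
  have hRcont : ContinuousOn (fun z => f₁ (ψc z) - z) (Set.Icc (p₂ - ρ) (p₂ + ρ)) :=
    ((hC1f₁.continuous.comp hψcont).sub continuous_id).continuousOn
  have hlo : p₂ - ρ ≤ p₂ + ρ := by linarith
  have hglo : 0 < f₁ (ψc (p₂ - ρ)) - (p₂ - ρ) := by
    have := (hR (p₂ - ρ) (by constructor <;> linarith)).2
    have habs := abs_lt.1 this
    have : ρ = δ₀ / 4 := hρdef
    linarith [habs.1]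
  have hghi : f₁ (ψc (p₂ + ρ)) - (p₂ + ρ) < 0 := by
    have := (hR (p₂ + ρ) (by constructor <;> linarith)).2
    have habs := abs_lt.1 this
    have : ρ = δ₀ / 4 := hρdef
    linarith [habs.2]
  have hivt := intermediate_value_Icc' hlo hRcont
  have h0mem : (0 : ℝ) ∈ Set.Icc (f₁ (ψc (p₂ + ρ)) - (p₂ + ρ)) (f₁ (ψc (p₂ - ρ)) - (p₂ - ρ)) :=
    ⟨hghi.le, hglo.le⟩
  obtain ⟨u, huJ, hu0⟩ := hivt h0mem
  have hfix : wordComp (φs i) (wordComp (ψs j) u) = u := by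
    have : f₁ (ψc u) - u = 0 := hu0
    have h2 : f₁ (ψc u) = u := by linarith
    exact h2
  have hup₂ : |u - p₂| < δ₀ / 50 := by
    have h1 := (hR u huJ).2
    have h2 : f₁ (ψc u) = u := by
      have : f₁ (ψc u) - u = 0 := hu0
      linarith
    rwa [h2] at h1
  have habsup₂ := abs_lt.1 hup₂
  have hsubJ : Set.Icc (u - δ₀ / 8) (u + δ₀ / 8) ⊆ Set.Icc (p₂ - ρ) (p₂ + ρ) := by
    intro z hz
    have h1 := hz.1
    have h2 := hz.2
    have : ρ = δ₀ / 4 := hρdef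
    constructor <;> linarith
  refine ⟨φs i, ψs j, u, ψc u, hφG i, hψG j, rfl, hfix, ?_, ?_, ?_, ?_⟩
  · -- derivative bound on the return map
    intro z hz
    have hzJ := hsubJ hz
    obtain ⟨hdz, hdistz⟩ := hcψ z hzJ
    have hd1 := (hR z hzJ).1
    have hdψpos : 0 < deriv ψc z := deriv_wordComp_pos hC1 hpos (hψG j) z
    have hchain : deriv (wordComp (φs i) ∘ wordComp (ψs j)) z
        = deriv f₁ (ψc z) * deriv ψc z :=
      deriv_comp z (hC1f₁.differentiable one_ne_zero _)
        ((isWord_contDiff hC1 (hψG j)).differentiable one_ne_zero _)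
    rw [hchain]
    calc deriv f₁ (ψc z) * deriv ψc z < Λ * deriv ψc z :=
          mul_lt_mul_of_pos_right hd1 hdψpos
      _ ≤ Λ * εj := mul_le_mul_of_nonneg_left hdz hΛpos.le
      _ < μ := hΛεjμ
  · -- v is fixed by ψ ∘ φ
    show wordComp (ψs j) (wordComp (φs i) (ψc u)) = ψc u
    rw [show wordComp (φs i) (ψc u) = u from hfix]
  · -- image of the interval under ψ
    rintro y ⟨z, hz, rfl⟩
    have hzJ := hsubJ hz
    have hdistz := (hcψ z hzJ).2
    have habs := abs_le.1 hdistz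
    constructor <;> [linarith [habs.1, hρεjδ₁]; linarith [habs.2, hρεjδ₁]]
  · -- v is δ₁-close to x
    have hdistu := (hcψ u huJ).2
    rw [abs_sub_comm]
    exact lt_of_le_of_lt hdistu hρεjδ₁
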